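/- Let Ψ be a symmetric real n×n matrix with nonnegative entries, and let p, q be vectors with strictly positive entries. Then pᵀ Ψ p ≤ qᵀ Ψ [p²/q], where [p²/q] denotes the vector with entries p_i²/q_i. -/

import Mathlib

theorem quadratic_form_upper_bound {n : ℕ} (Ψ : Matrix (Fin n) (Fin n) ℝ)
    (hsymm : Ψ.IsSymm) (hnonneg : ∀ i j, 0 ≤ Ψ i j)
    (p q : Fin n → ℝ) (hp : ∀ i, 0 < p i) (hq : ∀ i, 0 < q i) :
    ∑ i, ∑ j, p i * Ψ i j * p j ≤ ∑ i, ∑ j, q i * Ψ i j * (p j ^ 2 / q j) := by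
  have key : ∀ i j, 2 * (p i * Ψ i j * p j) ≤
      q i * Ψ i j * (p j ^ 2 / q j) + q j * Ψ i j * (p i ^ 2 / q i) := by
    intro i j
    have hqi := hq i
    have hqj := hq j
    have h2 : 2 * (p i * p j) ≤ q i * (p j ^ 2 / q j) + q j * (p i ^ 2 / q i) := by
      have heq : q i * (p j ^ 2 / q j) + q j * (p i ^ 2 / q i)
          = (q i ^ 2 * p j ^ 2 + q j ^ 2 * p i ^ 2) / (q i * q j) := by
        field_simp
      rw [heq, le_div_iff₀ (by positivity)]
      nlinarith [sq_nonneg (q i * p j - q j * p i)]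
    nlinarith [mul_le_mul_of_nonneg_left h2 (hnonneg i j)]
  have hsum : ∑ i, ∑ j, 2 * (p i * Ψ i j * p j) ≤
      ∑ i, ∑ j, (q i * Ψ i j * (p j ^ 2 / q j) + q j * Ψ i j * (p i ^ 2 / q i)) :=
    Finset.sum_le_sum fun i _ => Finset.sum_le_sum fun j _ => key i j
  have hswap : ∑ i, ∑ j, q j * Ψ i j * (p i ^ 2 / q i)
      = ∑ i, ∑ j, q i * Ψ i j * (p j ^ 2 / q j) := by
    rw [Finset.sum_comm]
    refine Finset.sum_congr rfl fun i _ => Finset.sum_congr rfl fun j _ => ?_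
    have : Ψ j i = Ψ i j := by
      have := hsymm; rw [Matrix.IsSymm] at this
      calc Ψ j i = Ψ.transpose i j := rfl
        _ = Ψ i j := by rw [this]
    rw [this]
  simp only [Finset.sum_add_distrib, ← Finset.mul_sum] at hsum
  rw [hswap] at hsum
  linarith
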